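/- Monotonicity of reachability: with ρ(k, i, t) defined as the predicate that there exists a subsequence simplification of ⟨p₁,…,p_i⟩ with exactly k links whose Fréchet distance to the subcurve P[0,t] is at most ε, it holds that ρ(k, i, t) is true if and only if there exist h with 0 < h < i and s with 0 ≤ s ≤ t such that ρ(k−1, h, s) is true and the segment from p_h to p_i has Fréchet distance at most ε to the subcurve P[s, t]. -/

import Mathlib

open Set

abbrev E2 := EuclideanSpace ℝ (Fin 2)

/-- A reparametrization: a continuous, monotone nondecreasing map of `[0,1]`
onto `[0,1]`. -/
def IsRepar (α : ℝ → ℝ) : Prop :=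
  ContinuousOn α (Icc 0 1) ∧ MonotoneOn α (Icc 0 1) ∧ α '' Icc 0 1 = Icc 0 1

/-- The Fréchet distance between two curves parametrized over `[0,1]`:
the infimum over pairs of reparametrizations of the sup-distance. -/
noncomputable def frechetDist (f g : ℝ → E2) : ℝ :=
  sInf {r : ℝ | 0 ≤ r ∧ ∃ α β : ℝ → ℝ, IsRepar α ∧ IsRepar β ∧
    ∀ t ∈ Icc (0:ℝ) 1, ‖f (α t) - g (β t)‖ ≤ r}

/-- The constant-speed parametrization of the segment from `a` to `b`. -/
noncomputable def segCurve (a b : E2) : ℝ → E2 := fun u => a + u • (b - a)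

/-- The piecewise-linear curve through `p 0, p 1, …`, parametrized so that
vertex `p k` is reached at time `k`. -/
noncomputable def polyParam (p : ℕ → E2) (t : ℝ) : E2 :=
  p ⌊t⌋₊ + (t - (⌊t⌋₊ : ℝ)) • (p (⌊t⌋₊ + 1) - p ⌊t⌋₊)

/-- The subcurve of the polyline between parameters `s` and `t`,
reparametrized over `[0,1]`. -/
noncomputable def subcurve (p : ℕ → E2) (s t : ℝ) : ℝ → E2 :=
  fun u => polyParam p (s + u * (t - s))

/-- The polygonal curve on the subsequence `p (j 0), …, p (j k)` of vertices
(a simplification with `k` links), reparametrized over `[0,1]`. -/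
noncomputable def simplCurve (p : ℕ → E2) (j : ℕ → ℕ) (k : ℕ) : ℝ → E2 :=
  fun u => polyParam (fun m => p (j (min m k))) (u * k)

/-- `rho ε p k i t`: the point at parameter `t` of the polyline `p` can be
reached by a simplification of `⟨p 0, …, p i⟩` with exactly `k` links, i.e.
there is a subsequence from `p 0` to `p i` with `k` links whose Fréchet
distance to the subcurve `P[0,t]` is at most `ε`. -/
def rho (ε : ℝ) (p : ℕ → E2) (k i : ℕ) (t : ℝ) : Prop :=
  ∃ j : ℕ → ℕ, StrictMonoOn j (Iic k) ∧ j 0 = 0 ∧ j k = i ∧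
    frechetDist (simplCurve p j k) (subcurve p 0 t) ≤ ε



lemma isRepar_id : IsRepar id := by
  refine ⟨continuousOn_id, fun a _ b _ h => h, image_id _⟩

lemma IsRepar.mem {α : ℝ → ℝ} (h : IsRepar α) {u : ℝ} (hu : u ∈ Icc (0:ℝ) 1) :
    α u ∈ Icc (0:ℝ) 1 := by
  rw [← h.2.2]; exact mem_image_of_mem _ hu

lemma IsRepar.map_zero {α : ℝ → ℝ} (h : IsRepar α) : α 0 = 0 := by
  have h0 : α 0 ∈ Icc (0:ℝ) 1 := h.mem (by norm_num)
  have : (0:ℝ) ∈ α '' Icc 0 1 := by rw [h.2.2]; norm_num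
  obtain ⟨x, hx, hαx⟩ := this
  have := h.2.1 (by norm_num : (0:ℝ) ∈ Icc (0:ℝ) 1) hx hx.1
  rw [hαx] at this
  exact le_antisymm this h0.1

lemma IsRepar.map_one {α : ℝ → ℝ} (h : IsRepar α) : α 1 = 1 := by
  have h0 : α 1 ∈ Icc (0:ℝ) 1 := h.mem (by norm_num)
  have : (1:ℝ) ∈ α '' Icc 0 1 := by rw [h.2.2]; norm_num
  obtain ⟨x, hx, hαx⟩ := this
  have := h.2.1 hx (by norm_num : (1:ℝ) ∈ Icc (0:ℝ) 1) hx.2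
  rw [hαx] at this
  exact le_antisymm h0.2 this

lemma isRepar_of {α : ℝ → ℝ} (hc : ContinuousOn α (Icc 0 1))
    (hm : MonotoneOn α (Icc 0 1)) (h0 : α 0 = 0) (h1 : α 1 = 1) :
    IsRepar α := by
  refine ⟨hc, hm, le_antisymm ?_ ?_⟩
  · rintro _ ⟨x, hx, rfl⟩
    constructor
    · rw [← h0]; exact hm (by norm_num) hx hx.1
    · rw [← h1]; exact hm hx (by norm_num) hx.2
  · have := intermediate_value_Icc (by norm_num : (0:ℝ) ≤ 1) hc
    rwa [h0, h1] at this

lemma monotoneOn_glue {f : ℝ → ℝ} {a b c : ℝ}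
    (h1 : MonotoneOn f (Icc a b)) (h2 : MonotoneOn f (Icc b c))
    (hab : a ≤ b) (hbc : b ≤ c) : MonotoneOn f (Icc a c) := by
  intro x hx y hy hxy
  rcases le_total x b with h | h <;> rcases le_total y b with h' | h'
  · exact h1 ⟨hx.1, h⟩ ⟨hy.1, h'⟩ hxy
  · exact (h1 ⟨hx.1, h⟩ ⟨hab, le_rfl⟩ h).trans (h2 ⟨le_rfl, hbc⟩ ⟨h', hy.2⟩ h')
  · exact le_of_eq (congrArg f (le_antisymm hxy (h'.trans h)))
  · exact h2 ⟨h, hx.2⟩ ⟨h', hy.2⟩ hxy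

lemma continuousOn_glue {X : Type*} [TopologicalSpace X] {f : ℝ → X} {a b c : ℝ}
    (h1 : ContinuousOn f (Icc a b)) (h2 : ContinuousOn f (Icc b c))
    (hab : a ≤ b) (hbc : b ≤ c) : ContinuousOn f (Icc a c) := by
  have hu : Icc a b ∪ Icc b c = Icc a c := Icc_union_Icc_eq_Icc hab hbc
  intro x hx
  have hx' : x ∈ Icc a b ∪ Icc b c := by rw [hu]; exact hx
  have c1 : ContinuousWithinAt f (Icc a b) x := by
    by_cases hxm : x ∈ Icc a b
    · exact h1 x hxm
    · exact continuousWithinAt_of_notMem_closure (by rwa [isClosed_Icc.closure_eq])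
  have c2 : ContinuousWithinAt f (Icc b c) x := by
    by_cases hxm : x ∈ Icc b c
    · exact h2 x hxm
    · exact continuousWithinAt_of_notMem_closure (by rwa [isClosed_Icc.closure_eq])
  have := c1.union c2
  rw [hu] at this
  exact this



lemma polyParam_piece (q : ℕ → E2) (n : ℕ) {x : ℝ} (hx : x ∈ Icc (n:ℝ) (n+1)) :
    polyParam q x = q n + (x - n) • (q (n+1) - q n) := by
  rcases eq_or_lt_of_le hx.2 with h | h
  · subst h
    have hfl : ⌊((n:ℝ)+1)⌋₊ = n + 1 := by
      rw [show ((n:ℝ)+1) = ((n+1:ℕ):ℝ) by push_cast; ring, Nat.floor_natCast]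
    simp only [polyParam, hfl]
    push_cast
    rw [sub_self, zero_smul, add_zero]
    have : ((n:ℝ) + 1 - n) = 1 := by ring
    rw [this, one_smul]
    abel
  · have hfl : ⌊x⌋₊ = n := by
      apply Nat.floor_eq_on_Ico n x ⟨hx.1, by exact_mod_cast h⟩
    simp only [polyParam, hfl]

lemma polyParam_congr {q1 q2 : ℕ → E2} {x : ℝ}
    (h1 : q1 ⌊x⌋₊ = q2 ⌊x⌋₊)
    (h2 : x = (⌊x⌋₊ : ℝ) ∨ q1 (⌊x⌋₊ + 1) = q2 (⌊x⌋₊ + 1)) :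
    polyParam q1 x = polyParam q2 x := by
  unfold polyParam
  rcases h2 with h2 | h2
  · have hz : x - (⌊x⌋₊:ℝ) = 0 := by rw [h2]; simp
    rw [h1, hz, zero_smul, zero_smul]
  · rw [h1, h2]

/-! ### bound and continuity -/

noncomputable def polyBound (q : ℕ → E2) (M : ℕ) : ℝ :=
  3 * ∑ n ∈ Finset.range (M+2), ‖q n‖

lemma polyBound_nonneg (q : ℕ → E2) (M : ℕ) : 0 ≤ polyBound q M := by
  unfold polyBound
  positivity

lemma norm_term_le (q : ℕ → E2) (M : ℕ) {m : ℕ} (hm : m < M + 2) :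
    ‖q m‖ ≤ ∑ n ∈ Finset.range (M+2), ‖q n‖ :=
  Finset.single_le_sum (fun n _ => norm_nonneg (q n)) (Finset.mem_range.2 hm)

lemma polyParam_bound (q : ℕ → E2) (M : ℕ) {x : ℝ} (hx : x ∈ Icc (0:ℝ) M) :
    ‖polyParam q x‖ ≤ polyBound q M := by
  have hfl : ⌊x⌋₊ ≤ M := by
    have := Nat.floor_le_floor (R := ℝ) hx.2
    simpa using this
  have hfrac : x - (⌊x⌋₊:ℝ) ≤ 1 := by
    have := Nat.lt_floor_add_one x
    linarith [this]
  have hfrac0 : 0 ≤ x - (⌊x⌋₊:ℝ) := by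
    have := Nat.floor_le hx.1
    linarith
  calc ‖polyParam q x‖ ≤ ‖q ⌊x⌋₊‖ + ‖(x - (⌊x⌋₊ : ℝ)) • (q (⌊x⌋₊ + 1) - q ⌊x⌋₊)‖ :=
        norm_add_le _ _
    _ ≤ ‖q ⌊x⌋₊‖ + 1 * (‖q (⌊x⌋₊ + 1)‖ + ‖q ⌊x⌋₊‖) := by
        gcongr
        rw [norm_smul]
        apply mul_le_mul
        · rw [Real.norm_eq_abs, abs_of_nonneg hfrac0]; exact hfrac
        · exact norm_sub_le _ _
        · exact norm_nonneg _
        · norm_num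
    _ ≤ polyBound q M := by
        have b1 := norm_term_le q M (by omega : ⌊x⌋₊ < M + 2)
        have b2 := norm_term_le q M (by omega : ⌊x⌋₊ + 1 < M + 2)
        unfold polyBound
        have hs : 0 ≤ ∑ n ∈ Finset.range (M+2), ‖q n‖ :=
          Finset.sum_nonneg (fun n _ => norm_nonneg _)
        linarith

lemma continuousOn_polyParam (q : ℕ → E2) (M : ℕ) :
    ContinuousOn (polyParam q) (Icc (0:ℝ) M) := by
  induction M with
  | zero =>
    simp only [Nat.cast_zero, Icc_self]
    intro x hx
    simp only [mem_singleton_iff] at hx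
    subst hx
    apply continuousWithinAt_singleton
  | succ n ih =>
    have h2 : ContinuousOn (polyParam q) (Icc (n:ℝ) (n+1)) := by
      have hc : ContinuousOn (fun x : ℝ => q n + (x - n) • (q (n+1) - q n))
          (Icc (n:ℝ) (n+1)) := by fun_prop
      exact hc.congr (fun x hx => polyParam_piece q n hx)
    have := continuousOn_glue ih h2 (Nat.cast_nonneg n) (by linarith [ (le_refl (n:ℝ))])
    convert this using 2
    push_cast; ring

/-! ### Fréchet distance helpers -/

lemma frechetDist_le_of_matching {f g : ℝ → E2} {r : ℝ} (hr : 0 ≤ r)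
    (h : ∃ α β : ℝ → ℝ, IsRepar α ∧ IsRepar β ∧
      ∀ u ∈ Icc (0:ℝ) 1, ‖f (α u) - g (β u)‖ ≤ r) :
    frechetDist f g ≤ r := by
  apply csInf_le
  · exact ⟨0, fun x hx => hx.1⟩
  · exact ⟨hr, h⟩

lemma exists_matching {f g : ℝ → E2} (B : ℝ)
    (hB : ∀ u ∈ Icc (0:ℝ) 1, ‖f u - g u‖ ≤ B) {ε : ℝ}
    (h : frechetDist f g ≤ ε) (hε : 0 ≤ ε) {δ : ℝ} (hδ : 0 < δ) :
    ∃ α β : ℝ → ℝ, IsRepar α ∧ IsRepar β ∧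
      ∀ u ∈ Icc (0:ℝ) 1, ‖f (α u) - g (β u)‖ ≤ ε + δ := by
  set S := {r : ℝ | 0 ≤ r ∧ ∃ α β : ℝ → ℝ, IsRepar α ∧ IsRepar β ∧
    ∀ t ∈ Icc (0:ℝ) 1, ‖f (α t) - g (β t)‖ ≤ r} with hS
  have hne : S.Nonempty := by
    refine ⟨max B 0, le_max_right _ _, id, id, isRepar_id, isRepar_id, ?_⟩
    intro u hu
    exact (hB u hu).trans (le_max_left _ _)
  have hbdd : BddBelow S := ⟨0, fun x hx => hx.1⟩
  have hlt : sInf S < ε + δ := lt_of_le_of_lt h (by linarith)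
  obtain ⟨r, hrS, hrlt⟩ := (csInf_lt_iff hbdd hne).mp hlt
  obtain ⟨hr0, α, β, hα, hβ, hm⟩ := hrS
  exact ⟨α, β, hα, hβ, fun u hu => (hm u hu).trans hrlt.le⟩

/-! ### Bounds for the specific curves -/

lemma norm_subcurve_le (p : ℕ → E2) {s t : ℝ} (hs : 0 ≤ s) (hst : s ≤ t) :
    ∀ u ∈ Icc (0:ℝ) 1, ‖subcurve p s t u‖ ≤ polyBound p ⌈t⌉₊ := by
  intro u hu
  apply polyParam_bound
  constructor
  · nlinarith [hu.1, hu.2]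
  · have h1 : s + u * (t - s) ≤ t := by nlinarith [hu.1, hu.2]
    exact h1.trans (Nat.le_ceil t)

lemma norm_simplCurve_le (p : ℕ → E2) (j : ℕ → ℕ) (k : ℕ) :
    ∀ u ∈ Icc (0:ℝ) 1, ‖simplCurve p j k u‖ ≤
      polyBound (fun m => p (j (min m k))) k := by
  intro u hu
  apply polyParam_bound
  constructor
  · exact mul_nonneg hu.1 (Nat.cast_nonneg k)
  · nlinarith [hu.1, hu.2, Nat.cast_nonneg (α := ℝ) k]

lemma norm_segCurve_le (a b : E2) :
    ∀ u ∈ Icc (0:ℝ) 1, ‖segCurve a b u‖ ≤ ‖a‖ + ‖b - a‖ := by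
  intro u hu
  calc ‖a + u • (b - a)‖ ≤ ‖a‖ + ‖u • (b - a)‖ := norm_add_le _ _
    _ ≤ ‖a‖ + ‖b - a‖ := by
        gcongr
        rw [norm_smul, Real.norm_eq_abs, abs_of_nonneg hu.1]
        nlinarith [norm_nonneg (b - a), hu.2]


/-! ### Identities between pieces of curves -/

lemma polyParam_prefix (p : ℕ → E2) (j : ℕ → ℕ) (k : ℕ)
    {x : ℝ} (hx : x ∈ Icc (0:ℝ) k) :
    polyParam (fun m => p (j (min m k))) x
      = polyParam (fun m => p (j (min m (k+1)))) x := by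
  have hfl : ⌊x⌋₊ ≤ k := by
    have := Nat.floor_le_floor (R := ℝ) hx.2
    simpa using this
  apply polyParam_congr
  · simp only [min_eq_left hfl, min_eq_left (le_trans hfl (Nat.le_succ k))]
  · rcases lt_or_eq_of_le hfl with hlt | heq
    · right
      simp only [min_eq_left (by omega : ⌊x⌋₊ + 1 ≤ k),
        min_eq_left (by omega : ⌊x⌋₊ + 1 ≤ k + 1)]
    · left
      have h1 : (k:ℝ) ≤ x := by
        rw [← heq]; exact Nat.floor_le hx.1
      have : x = (k:ℝ) := le_antisymm hx.2 h1
      rw [this]; simp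

lemma seg_suffix (p : ℕ → E2) (j : ℕ → ℕ) (k : ℕ) {w : ℝ}
    (hw : w ∈ Icc ((k:ℝ)/(k+1)) 1) :
    simplCurve p j (k+1) w
      = segCurve (p (j k)) (p (j (k+1))) (w * (k+1) - k) := by
  have hk1 : (0:ℝ) < (k:ℝ) + 1 := by positivity
  have hx : w * ((k:ℝ)+1) ∈ Icc ((k:ℝ)) ((k:ℝ)+1) := by
    constructor
    · have := hw.1
      calc (k:ℝ) = (k:ℝ)/(k+1) * (k+1) := by field_simp
        _ ≤ w * (k+1) := by gcongr
    · nlinarith [hw.2]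
  have hcast : ((k+1:ℕ):ℝ) = (k:ℝ) + 1 := by push_cast; ring
  show polyParam (fun m => p (j (min m (k+1)))) (w * ((k+1:ℕ):ℝ)) = _
  rw [hcast]
  rw [polyParam_piece _ k hx]
  simp only [min_self, min_eq_left (Nat.le_succ k), segCurve]

lemma subcurve_arg (p : ℕ → E2) (s t u : ℝ) :
    subcurve p s t u = polyParam p (s + u * (t - s)) := rfl

lemma simplCurve_arg (p : ℕ → E2) (j : ℕ → ℕ) (k : ℕ) (u : ℝ) :
    simplCurve p j k u = polyParam (fun m => p (j (min m k))) (u * k) := rfl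

/-! ### Splitting a matching at the last vertex -/

lemma split_matching (p : ℕ → E2) (j : ℕ → ℕ) (k : ℕ) {t r : ℝ} (ht : 0 ≤ t)
    (α β : ℝ → ℝ) (hα : IsRepar α) (hβ : IsRepar β)
    (hm : ∀ u ∈ Icc (0:ℝ) 1,
      ‖simplCurve p j (k+1) (α u) - subcurve p 0 t (β u)‖ ≤ r) :
    ∃ s, 0 ≤ s ∧ s ≤ t ∧
      (∃ α1 β1 : ℝ → ℝ, IsRepar α1 ∧ IsRepar β1 ∧ ∀ u ∈ Icc (0:ℝ) 1,
        ‖simplCurve p j k (α1 u) - subcurve p 0 s (β1 u)‖ ≤ r) ∧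
      (∃ α2 β2 : ℝ → ℝ, IsRepar α2 ∧ IsRepar β2 ∧ ∀ u ∈ Icc (0:ℝ) 1,
        ‖segCurve (p (j k)) (p (j (k+1))) (α2 u) - subcurve p s t (β2 u)‖ ≤ r) := by
  have hk1 : (0:ℝ) < (k:ℝ) + 1 := by positivity
  have hkk : (k:ℝ)/((k:ℝ)+1) ∈ Icc (0:ℝ) 1 :=
    ⟨by positivity, by rw [div_le_one hk1]; linarith⟩
  obtain ⟨t0, ht0mem, ht0⟩ : ∃ t0 ∈ Icc (0:ℝ) 1, α t0 = (k:ℝ)/((k:ℝ)+1) := by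
    rw [← hα.2.2] at hkk
    obtain ⟨t0, h1, h2⟩ := hkk
    exact ⟨t0, h1, h2⟩
  set s := β t0 * t with hs_def
  have hβt0 : β t0 ∈ Icc (0:ℝ) 1 := hβ.mem ht0mem
  have hs0 : 0 ≤ s := mul_nonneg hβt0.1 ht
  have hst : s ≤ t := by nlinarith [hβt0.2]
  have hmulmem : ∀ u ∈ Icc (0:ℝ) 1, u * t0 ∈ Icc (0:ℝ) 1 := by
    intro u hu
    exact ⟨mul_nonneg hu.1 ht0mem.1, by nlinarith [hu.2, ht0mem.1, ht0mem.2]⟩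
  have hmulle : ∀ u ∈ Icc (0:ℝ) 1, u * t0 ≤ t0 := by
    intro u hu; nlinarith [hu.1, hu.2, ht0mem.1]
  have hαle : ∀ u ∈ Icc (0:ℝ) 1, α (u * t0) ∈ Icc (0:ℝ) ((k:ℝ)/((k:ℝ)+1)) := by
    intro u hu
    constructor
    · rw [← hα.map_zero]
      exact hα.2.1 (left_mem_Icc.2 zero_le_one) (hmulmem u hu) (hmulmem u hu).1
    · rw [← ht0]
      exact hα.2.1 (hmulmem u hu) ht0mem (hmulle u hu)
  have hβle : ∀ u ∈ Icc (0:ℝ) 1, β (u * t0) ∈ Icc (0:ℝ) (β t0) := by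
    intro u hu
    constructor
    · rw [← hβ.map_zero]
      exact hβ.2.1 (left_mem_Icc.2 zero_le_one) (hmulmem u hu) (hmulmem u hu).1
    · exact hβ.2.1 (hmulmem u hu) ht0mem (hmulle u hu)
  refine ⟨s, hs0, hst, ?_, ?_⟩
  · -- prefix piece
    have hB1 : ∃ β1 : ℝ → ℝ, IsRepar β1 ∧ ∀ u ∈ Icc (0:ℝ) 1,
        subcurve p 0 s (β1 u) = subcurve p 0 t (β (u * t0)) := by
      by_cases hs : s = 0
      · refine ⟨fun u => u, isRepar_id, ?_⟩
        intro u hu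
        have h1 : β (u * t0) * t = 0 := by
          refine le_antisymm ?_ (mul_nonneg (hβle u hu).1 ht)
          calc β (u * t0) * t ≤ β t0 * t :=
                mul_le_mul_of_nonneg_right (hβle u hu).2 ht
            _ = s := rfl
            _ = 0 := hs
        rw [subcurve_arg, subcurve_arg]
        congr 1
        simp only [zero_add, sub_zero]
        rw [hs, h1]
        ring
      · have hspos : 0 < s := lt_of_le_of_ne hs0 (Ne.symm hs)
        refine ⟨fun u => β (u * t0) * (t / s), isRepar_of ?_ ?_ ?_ ?_, ?_⟩
        · exact (hβ.1.comp (by fun_prop) (fun u hu => hmulmem u hu)).mul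
            continuousOn_const
        · intro a ha b hb hab
          exact mul_le_mul_of_nonneg_right
            (hβ.2.1 (hmulmem a ha) (hmulmem b hb)
              (mul_le_mul_of_nonneg_right hab ht0mem.1))
            (div_nonneg ht hspos.le)
        · show β (0 * t0) * (t / s) = 0
          rw [zero_mul, hβ.map_zero, zero_mul]
        · show β (1 * t0) * (t / s) = 1
          rw [one_mul, mul_div_assoc', ← hs_def, div_self hspos.ne']
        · intro u hu
          rw [subcurve_arg, subcurve_arg]
          congr 1
          field_simp
          ring
    have hA1 : ∃ α1 : ℝ → ℝ, IsRepar α1 ∧ ∀ u ∈ Icc (0:ℝ) 1,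
        simplCurve p j k (α1 u) = simplCurve p j (k+1) (α (u * t0)) := by
      by_cases hk : k = 0
      · subst hk
        refine ⟨fun u => u, isRepar_id, ?_⟩
        intro u hu
        obtain ⟨ha, hb⟩ := hαle u hu
        have h0 : α (u * t0) = 0 := le_antisymm (by simpa using hb) ha
        rw [simplCurve_arg, simplCurve_arg]
        have e1 : u * ((0:ℕ):ℝ) = 0 := by norm_num
        have e2 : α (u * t0) * (((0+1:ℕ)):ℝ) = 0 := by rw [h0]; ring
        rw [e1, e2]
        exact polyParam_prefix p j 0 (by norm_num)
      · have hkR : (0:ℝ) < (k:ℝ) := by exact_mod_cast Nat.pos_of_ne_zero hk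
        refine ⟨fun u => α (u * t0) * (((k:ℝ)+1)/k), isRepar_of ?_ ?_ ?_ ?_, ?_⟩
        · exact (hα.1.comp (by fun_prop) (fun u hu => hmulmem u hu)).mul
            continuousOn_const
        · intro a ha b hb hab
          exact mul_le_mul_of_nonneg_right
            (hα.2.1 (hmulmem a ha) (hmulmem b hb)
              (mul_le_mul_of_nonneg_right hab ht0mem.1))
            (by positivity)
        · show α (0 * t0) * (((k:ℝ)+1)/k) = 0
          rw [zero_mul, hα.map_zero, zero_mul]
        · show α (1 * t0) * (((k:ℝ)+1)/k) = 1
          rw [one_mul, ht0]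
          field_simp
        · intro u hu
          rw [simplCurve_arg, simplCurve_arg]
          have e1 : α (u * t0) * (((k:ℝ)+1)/k) * (k:ℝ)
              = α (u * t0) * (((k+1:ℕ)):ℝ) := by
            push_cast
            field_simp
          rw [e1]
          refine polyParam_prefix p j k ⟨?_, ?_⟩
          · have := (hαle u hu).1
            positivity
          · have hb := (hαle u hu).2
            have : α (u * t0) * (((k+1:ℕ)):ℝ) ≤ (k:ℝ)/((k:ℝ)+1) * ((k:ℝ)+1) := by
              push_cast
              nlinarith
            calc α (u * t0) * (((k+1:ℕ)):ℝ) ≤ (k:ℝ)/((k:ℝ)+1) * ((k:ℝ)+1) := this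
              _ = (k:ℝ) := by field_simp
    obtain ⟨β1, hβ1, hkey2⟩ := hB1
    obtain ⟨α1, hα1, hkey1⟩ := hA1
    refine ⟨α1, β1, hα1, hβ1, ?_⟩
    intro u hu
    rw [hkey1 u hu, hkey2 u hu]
    exact hm (u * t0) (hmulmem u hu)
  · -- suffix piece
    have hv01 : ∀ u ∈ Icc (0:ℝ) 1, t0 + u * (1 - t0) ∈ Icc (0:ℝ) 1 := by
      intro u hu
      constructor
      · nlinarith [hu.1, ht0mem.1, ht0mem.2]
      · nlinarith [hu.2, hu.1, ht0mem.1, ht0mem.2]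
    have hvge : ∀ u ∈ Icc (0:ℝ) 1, t0 ≤ t0 + u * (1 - t0) := by
      intro u hu; nlinarith [hu.1, ht0mem.2]
    have hαv : ∀ u ∈ Icc (0:ℝ) 1,
        α (t0 + u * (1 - t0)) ∈ Icc ((k:ℝ)/((k:ℝ)+1)) 1 := by
      intro u hu
      constructor
      · rw [← ht0]
        exact hα.2.1 ht0mem (hv01 u hu) (hvge u hu)
      · calc α (t0 + u * (1 - t0)) ≤ α 1 :=
              hα.2.1 (hv01 u hu) (right_mem_Icc.2 zero_le_one) (hv01 u hu).2
          _ = 1 := hα.map_one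
    have hβv : ∀ u ∈ Icc (0:ℝ) 1,
        β (t0 + u * (1 - t0)) ∈ Icc (β t0) 1 := by
      intro u hu
      constructor
      · exact hβ.2.1 ht0mem (hv01 u hu) (hvge u hu)
      · calc β (t0 + u * (1 - t0)) ≤ β 1 :=
              hβ.2.1 (hv01 u hu) (right_mem_Icc.2 zero_le_one) (hv01 u hu).2
          _ = 1 := hβ.map_one
    have hB2 : ∃ β2 : ℝ → ℝ, IsRepar β2 ∧ ∀ u ∈ Icc (0:ℝ) 1,
        subcurve p s t (β2 u) = subcurve p 0 t (β (t0 + u * (1 - t0))) := by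
      by_cases hs : s = t
      · refine ⟨fun u => u, isRepar_id, ?_⟩
        intro u hu
        have h1 : β (t0 + u * (1 - t0)) * t = s := by
          refine le_antisymm ?_ ?_
          · calc β (t0 + u * (1 - t0)) * t ≤ 1 * t :=
                mul_le_mul_of_nonneg_right (hβv u hu).2 ht
              _ = t := one_mul t
              _ = s := hs.symm
          · calc s = β t0 * t := hs_def
              _ ≤ β (t0 + u * (1 - t0)) * t :=
                mul_le_mul_of_nonneg_right (hβv u hu).1 ht
        rw [subcurve_arg, subcurve_arg]
        congr 1
        simp only [zero_add, sub_zero]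
        rw [h1, ← hs]
        ring
      · have htps : 0 < t - s := by
          rcases lt_or_eq_of_le hst with h | h
          · linarith
          · exact absurd h hs
        refine ⟨fun u => (β (t0 + u * (1 - t0)) * t - s) / (t - s),
          isRepar_of ?_ ?_ ?_ ?_, ?_⟩
        · exact (((hβ.1.comp (by fun_prop) (fun u hu => hv01 u hu)).mul
            continuousOn_const).sub continuousOn_const).div_const _
        · intro a ha b hb hab
          apply (div_le_div_iff_of_pos_right htps).2
          apply sub_le_sub_right
          exact mul_le_mul_of_nonneg_right
            (hβ.2.1 (hv01 a ha) (hv01 b hb) (by nlinarith [ht0mem.2])) ht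
        · show (β (t0 + 0 * (1 - t0)) * t - s) / (t - s) = 0
          rw [zero_mul, add_zero, ← hs_def, sub_self, zero_div]
        · show (β (t0 + 1 * (1 - t0)) * t - s) / (t - s) = 1
          have e : t0 + 1 * (1 - t0) = 1 := by ring
          rw [e, hβ.map_one, one_mul, div_self htps.ne']
        · intro u hu
          rw [subcurve_arg, subcurve_arg]
          congr 1
          field_simp
          ring
    obtain ⟨β2, hβ2, hkey2⟩ := hB2
    refine ⟨fun u => α (t0 + u * (1 - t0)) * ((k:ℝ)+1) - k, β2,
      isRepar_of ?_ ?_ ?_ ?_, hβ2, ?_⟩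
    · exact ((hα.1.comp (by fun_prop) (fun u hu => hv01 u hu)).mul
        continuousOn_const).sub continuousOn_const
    · intro a ha b hb hab
      apply sub_le_sub_right
      exact mul_le_mul_of_nonneg_right
        (hα.2.1 (hv01 a ha) (hv01 b hb) (by nlinarith [ht0mem.2])) (by positivity)
    · show α (t0 + 0 * (1 - t0)) * ((k:ℝ)+1) - k = 0
      rw [zero_mul, add_zero, ht0]
      field_simp
      ring
    · show α (t0 + 1 * (1 - t0)) * ((k:ℝ)+1) - k = 1
      have e : t0 + 1 * (1 - t0) = 1 := by ring
      rw [e, hα.map_one]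
      ring
    · intro u hu
      show ‖segCurve (p (j k)) (p (j (k+1)))
          (α (t0 + u * (1 - t0)) * ((k:ℝ)+1) - k) - subcurve p s t (β2 u)‖ ≤ r
      rw [hkey2 u hu, ← seg_suffix p j k (hαv u hu)]
      exact hm _ (hv01 u hu)

/-! ### Gluing two matchings -/

lemma glue_matching (p : ℕ → E2) (j1 : ℕ → ℕ) (i k : ℕ) {s t r : ℝ}
    (hs : 0 ≤ s) (hst : s ≤ t) (hr : 0 ≤ r)
    (α1 β1 α2 β2 : ℝ → ℝ) (hα1 : IsRepar α1) (hβ1 : IsRepar β1)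
    (hα2 : IsRepar α2) (hβ2 : IsRepar β2)
    (hm1 : ∀ u ∈ Icc (0:ℝ) 1,
      ‖simplCurve p j1 k (α1 u) - subcurve p 0 s (β1 u)‖ ≤ r)
    (hm2 : ∀ u ∈ Icc (0:ℝ) 1,
      ‖segCurve (p (j1 k)) (p i) (α2 u) - subcurve p s t (β2 u)‖ ≤ r) :
    frechetDist (simplCurve p (fun m => if m ≤ k then j1 m else i) (k+1))
      (subcurve p 0 t) ≤ r := by
  set j : ℕ → ℕ := fun m => if m ≤ k then j1 m else i with hj_def
  have hk1 : (0:ℝ) < (k:ℝ) + 1 := by positivity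
  have h2v : ∀ v ∈ Icc (0:ℝ) (1/2), 2*v ∈ Icc (0:ℝ) 1 := by
    intro v hv; exact ⟨by linarith [hv.1], by linarith [hv.2]⟩
  have h2v' : ∀ v ∈ Icc (1/2:ℝ) 1, 2*v - 1 ∈ Icc (0:ℝ) 1 := by
    intro v hv; exact ⟨by linarith [hv.1], by linarith [hv.2]⟩
  -- the glued reparametrization of the simplification side
  set A : ℝ → ℝ := fun v => if v ≤ 1/2 then α1 (2*v) * ((k:ℝ)/((k:ℝ)+1))
    else ((k:ℝ) + α2 (2*v - 1)) / ((k:ℝ)+1) with hA_def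
  have eqA1 : EqOn A (fun v => α1 (2*v) * ((k:ℝ)/((k:ℝ)+1))) (Icc 0 (1/2)) := by
    intro v hv
    simp only [hA_def, if_pos hv.2]
  have eqA2 : EqOn A (fun v => ((k:ℝ) + α2 (2*v - 1)) / ((k:ℝ)+1))
      (Icc (1/2) 1) := by
    intro v hv
    by_cases hv2 : v ≤ 1/2
    · have hveq : v = 1/2 := le_antisymm hv2 hv.1
      subst hveq
      simp only [hA_def, if_pos le_rfl]
      norm_num [hα1.map_one, hα2.map_zero]
    · simp only [hA_def, if_neg hv2]
  have hArep : IsRepar A := by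
    apply isRepar_of
    · apply continuousOn_glue (b := 1/2) ?_ ?_ (by norm_num) (by norm_num)
      · exact ContinuousOn.congr
          ((hα1.1.comp (by fun_prop) (fun v hv => h2v v hv)).mul continuousOn_const)
          eqA1
      · exact ContinuousOn.congr
          ((((continuousOn_const (c := (k:ℝ))).add
            (hα2.1.comp (by fun_prop) (fun v hv => h2v' v hv)))).div_const _)
          eqA2
    · apply monotoneOn_glue (b := 1/2) ?_ ?_ (by norm_num) (by norm_num)
      · intro a ha b hb hab
        rw [eqA1 ha, eqA1 hb]
        exact mul_le_mul_of_nonneg_right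
          (hα1.2.1 (h2v a ha) (h2v b hb) (by linarith)) (by positivity)
      · intro a ha b hb hab
        rw [eqA2 ha, eqA2 hb]
        apply div_le_div_of_nonneg_right ?_ hk1.le
        have := hα2.2.1 (h2v' a ha) (h2v' b hb) (by linarith)
        linarith
    · simp only [hA_def, if_pos (by norm_num : (0:ℝ) ≤ 1/2)]
      rw [mul_zero, hα1.map_zero, zero_mul]
    · simp only [hA_def, if_neg (by norm_num : ¬ (1:ℝ) ≤ 1/2)]
      rw [show (2:ℝ)*1 - 1 = 1 by norm_num, hα2.map_one]
      field_simp
  -- the glued reparametrization of the polyline side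
  set Bf : ℝ → ℝ := if t = 0 then (fun v => v) else
    fun v => if v ≤ 1/2 then β1 (2*v) * (s/t)
      else (s + β2 (2*v - 1) * (t - s)) / t with hB_def
  have hBrep : IsRepar Bf := by
    by_cases htz : t = 0
    · rw [hB_def, if_pos htz]; exact isRepar_id
    · have htpos : 0 < t := lt_of_le_of_ne (hs.trans hst) (Ne.symm htz)
      rw [hB_def, if_neg htz]
      set B1 : ℝ → ℝ := fun v => β1 (2*v) * (s/t) with hB1_def
      set B2 : ℝ → ℝ := fun v => (s + β2 (2*v - 1) * (t - s)) / t with hB2_def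
      set B : ℝ → ℝ := fun v => if v ≤ 1/2 then B1 v else B2 v with hBB
      have eqB1 : EqOn B B1 (Icc 0 (1/2)) := by
        intro v hv; simp only [hBB, if_pos hv.2]
      have eqB2 : EqOn B B2 (Icc (1/2) 1) := by
        intro v hv
        by_cases hv2 : v ≤ 1/2
        · have hveq : v = 1/2 := le_antisymm hv2 hv.1
          subst hveq
          simp only [hBB, if_pos le_rfl, hB1_def, hB2_def]
          norm_num [hβ1.map_one, hβ2.map_zero]
        · simp only [hBB, if_neg hv2]
      apply isRepar_of
      · apply continuousOn_glue (b := 1/2) ?_ ?_ (by norm_num) (by norm_num)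
        · exact ContinuousOn.congr
            ((hβ1.1.comp (by fun_prop) (fun v hv => h2v v hv)).mul
              continuousOn_const) eqB1
        · exact ContinuousOn.congr
            (((continuousOn_const (c := s)).add
              ((hβ2.1.comp (by fun_prop) (fun v hv => h2v' v hv)).mul
                continuousOn_const)).div_const _) eqB2
      · apply monotoneOn_glue (b := 1/2) ?_ ?_ (by norm_num) (by norm_num)
        · intro a ha b hb hab
          rw [eqB1 ha, eqB1 hb]
          exact mul_le_mul_of_nonneg_right
            (hβ1.2.1 (h2v a ha) (h2v b hb) (by linarith))
            (div_nonneg hs htpos.le)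
        · intro a ha b hb hab
          rw [eqB2 ha, eqB2 hb]
          apply div_le_div_of_nonneg_right ?_ htpos.le
          have := hβ2.2.1 (h2v' a ha) (h2v' b hb) (by linarith)
          nlinarith [this]
      · simp only [hBB, if_pos (by norm_num : (0:ℝ) ≤ 1/2), hB1_def]
        rw [mul_zero, hβ1.map_zero, zero_mul]
      · simp only [hBB, if_neg (by norm_num : ¬ (1:ℝ) ≤ 1/2), hB2_def]
        rw [show (2:ℝ)*1 - 1 = 1 by norm_num, hβ2.map_one, one_mul]
        field_simp
        ring
  -- the matching property
  apply frechetDist_le_of_matching hr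
  refine ⟨A, Bf, hArep, hBrep, ?_⟩
  intro v hv
  by_cases hv2 : v ≤ 1/2
  · have hvmem : v ∈ Icc (0:ℝ) (1/2) := ⟨hv.1, hv2⟩
    have hα1mem := hα1.mem (h2v v hvmem)
    -- identity on the simplification side
    have idA : simplCurve p j (k+1) (A v) = simplCurve p j1 k (α1 (2*v)) := by
      rw [simplCurve_arg, simplCurve_arg]
      have e1 : A v * (((k+1:ℕ)):ℝ) = α1 (2*v) * (k:ℝ) := by
        rw [eqA1 hvmem]
        push_cast
        field_simp
      rw [e1]
      have e2 : (fun m => p (j1 (min m k))) = (fun m => p (j (min m k))) := by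
        funext m
        simp only [hj_def, if_pos (min_le_right m k)]
      rw [e2]
      exact (polyParam_prefix p j k
        ⟨mul_nonneg hα1mem.1 (Nat.cast_nonneg k),
          by nlinarith [hα1mem.2, Nat.cast_nonneg (α := ℝ) k]⟩).symm
    -- identity on the polyline side
    have idB : subcurve p 0 t (Bf v) = subcurve p 0 s (β1 (2*v)) := by
      rw [subcurve_arg, subcurve_arg]
      congr 1
      by_cases htz : t = 0
      · have hsz : s = 0 := le_antisymm (hst.trans_eq htz) hs
        rw [htz, hsz]
        ring
      · simp only [hB_def, if_neg htz, if_pos hv2]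
        field_simp
        ring
    rw [idA, idB]
    exact hm1 (2*v) (h2v v hvmem)
  · have hvmem : v ∈ Icc (1/2:ℝ) 1 := ⟨le_of_not_ge hv2, hv.2⟩
    have hα2mem := hα2.mem (h2v' v hvmem)
    have hw : A v ∈ Icc ((k:ℝ)/((k:ℝ)+1)) 1 := by
      rw [eqA2 hvmem]
      constructor
      · apply div_le_div_of_nonneg_right ?_ hk1.le
        linarith [hα2mem.1]
      · rw [div_le_one hk1]
        linarith [hα2mem.2]
    have idA : simplCurve p j (k+1) (A v)
        = segCurve (p (j1 k)) (p i) (α2 (2*v - 1)) := by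
      rw [seg_suffix p j k hw]
      have e1 : j k = j1 k := by simp [hj_def]
      have e2 : j (k+1) = i := by simp [hj_def]
      have e3 : A v * ((k:ℝ)+1) - k = α2 (2*v - 1) := by
        rw [eqA2 hvmem]
        field_simp
        ring
      rw [e1, e2, e3]
    have idB : subcurve p 0 t (Bf v) = subcurve p s t (β2 (2*v - 1)) := by
      rw [subcurve_arg, subcurve_arg]
      congr 1
      by_cases htz : t = 0
      · have hsz : s = 0 := le_antisymm (hst.trans_eq htz) hs
        rw [htz, hsz]
        ring
      · simp only [hB_def, if_neg htz, if_neg hv2]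
        field_simp
        ring
    rw [idA, idB]
    exact hm2 (2*v - 1) (h2v' v hvmem)

lemma subcurve_zero (p : ℕ → E2) (s v : ℝ) :
    subcurve p 0 s v = polyParam p (v * s) := by
  rw [subcurve_arg]; congr 1; ring


/-- Observation: a point is reachable by a `(k+1, i)`-simplification iff some
point `s ≤ t` is reachable by a `(k, h)`-simplification for a vertex `h` before
`i`, and the link from `p h` to `p i` has Fréchet distance at most `ε` to the
subcurve `P[s,t]`. -/
theorem stmt_9 (ε : ℝ) (hε : 0 ≤ ε) (p : ℕ → E2) (k i : ℕ) (t : ℝ)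
    (ht : 0 ≤ t) :
    rho ε p (k + 1) i t ↔
      ∃ h < i, ∃ s, 0 ≤ s ∧ s ≤ t ∧ rho ε p k h s ∧
        frechetDist (segCurve (p h) (p i)) (subcurve p s t) ≤ ε := by
  constructor
  · rintro ⟨j, hjmono, hj0, hjk1, hjd⟩
    have hhi : j k < i := by
      rw [← hjk1]
      exact hjmono (mem_Iic.2 (Nat.le_succ k)) (mem_Iic.2 le_rfl) (Nat.lt_succ_self k)
    have hBbig : ∀ u ∈ Icc (0:ℝ) 1,
        ‖simplCurve p j (k+1) u - subcurve p 0 t u‖ ≤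
          polyBound (fun m => p (j (min m (k+1)))) (k+1) + polyBound p ⌈t⌉₊ := by
      intro u hu
      calc ‖simplCurve p j (k+1) u - subcurve p 0 t u‖
          ≤ ‖simplCurve p j (k+1) u‖ + ‖subcurve p 0 t u‖ := norm_sub_le _ _
        _ ≤ _ := add_le_add (norm_simplCurve_le p j (k+1) u hu)
            (norm_subcurve_le p le_rfl ht u hu)
    have key : ∀ n : ℕ, ∃ s, 0 ≤ s ∧ s ≤ t ∧
        (∃ α1 β1 : ℝ → ℝ, IsRepar α1 ∧ IsRepar β1 ∧ ∀ u ∈ Icc (0:ℝ) 1,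
          ‖simplCurve p j k (α1 u) - subcurve p 0 s (β1 u)‖ ≤ ε + 1/((n:ℝ)+1)) ∧
        (∃ α2 β2 : ℝ → ℝ, IsRepar α2 ∧ IsRepar β2 ∧ ∀ u ∈ Icc (0:ℝ) 1,
          ‖segCurve (p (j k)) (p (j (k+1))) (α2 u) - subcurve p s t (β2 u)‖
            ≤ ε + 1/((n:ℝ)+1)) := by
      intro n
      have hδ : (0:ℝ) < 1/((n:ℝ)+1) := by positivity
      obtain ⟨α, β, hα, hβ, hm⟩ := exists_matching _ hBbig hjd hε hδ
      exact split_matching p j k ht α β hα hβ hm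
    choose S hS0 hSt hSpre hSsuf using key
    obtain ⟨s0, hs0mem, φ, hφ, hlim⟩ :=
      isCompact_Icc.tendsto_subseq (x := S) (fun n => ⟨hS0 n, hSt n⟩)
    have hcont : ContinuousOn (polyParam p) (Icc 0 t) :=
      (continuousOn_polyParam p ⌈t⌉₊).mono (Icc_subset_Icc le_rfl (Nat.le_ceil t))
    have hUC := isCompact_Icc.uniformContinuousOn_of_continuous hcont
    rw [Metric.uniformContinuousOn_iff] at hUC
    -- a uniform way to pick a good index
    have pick : ∀ δ : ℝ, 0 < δ → ∀ η : ℝ, 0 < η → ∃ n : ℕ,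
        dist (S (φ n)) s0 < η ∧ (1:ℝ)/((φ n : ℝ)+1) < δ/2 := by
      intro δ hδ η hη
      obtain ⟨N1, hN1⟩ := Metric.tendsto_atTop.1 hlim η hη
      obtain ⟨N2, hN2⟩ := exists_nat_one_div_lt (by linarith : (0:ℝ) < δ/2)
      refine ⟨max N1 N2, hN1 _ (le_max_left _ _), ?_⟩
      have hle : (N2:ℝ) + 1 ≤ (φ (max N1 N2) : ℝ) + 1 := by
        have h1 : N2 ≤ max N1 N2 := le_max_right _ _
        have h2 : max N1 N2 ≤ φ (max N1 N2) := hφ.le_apply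
        have : N2 ≤ φ (max N1 N2) := le_trans h1 h2
        exact_mod_cast Nat.succ_le_succ this
      calc (1:ℝ)/((φ (max N1 N2) : ℝ)+1) ≤ 1/((N2:ℝ)+1) :=
            one_div_le_one_div_of_le (by positivity) hle
        _ < δ/2 := hN2
    have claim1 : frechetDist (simplCurve p j k) (subcurve p 0 s0) ≤ ε := by
      apply le_of_forall_pos_le_add
      intro δ hδ
      obtain ⟨η, hη, hUC'⟩ := hUC (δ/2) (by linarith)
      obtain ⟨n, hd, hsmall⟩ := pick δ hδ η hη
      obtain ⟨α1, β1, hα1, hβ1, hm1⟩ := hSpre (φ n)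
      apply frechetDist_le_of_matching (by linarith)
      refine ⟨α1, β1, hα1, hβ1, ?_⟩
      intro u hu
      have hb1 : β1 u ∈ Icc (0:ℝ) 1 := hβ1.mem hu
      have harg1 : β1 u * S (φ n) ∈ Icc (0:ℝ) t :=
        ⟨mul_nonneg hb1.1 (hS0 _), by nlinarith [hb1.2, hSt (φ n), hS0 (φ n)]⟩
      have harg2 : β1 u * s0 ∈ Icc (0:ℝ) t :=
        ⟨mul_nonneg hb1.1 hs0mem.1, by nlinarith [hb1.2, hs0mem.2, hs0mem.1]⟩
      have hdist : dist (β1 u * S (φ n)) (β1 u * s0) < η := by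
        rw [Real.dist_eq]
        calc |β1 u * S (φ n) - β1 u * s0| = β1 u * |S (φ n) - s0| := by
              rw [← mul_sub, abs_mul, abs_of_nonneg hb1.1]
          _ ≤ 1 * |S (φ n) - s0| :=
              mul_le_mul_of_nonneg_right hb1.2 (abs_nonneg _)
          _ = |S (φ n) - s0| := one_mul _
          _ < η := by rw [← Real.dist_eq]; exact hd
      have hpp := hUC' _ harg1 _ harg2 hdist
      rw [dist_eq_norm] at hpp
      calc ‖simplCurve p j k (α1 u) - subcurve p 0 s0 (β1 u)‖
          ≤ ‖simplCurve p j k (α1 u) - subcurve p 0 (S (φ n)) (β1 u)‖ +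
            ‖subcurve p 0 (S (φ n)) (β1 u) - subcurve p 0 s0 (β1 u)‖ := by
            simpa [dist_eq_norm] using dist_triangle
              (simplCurve p j k (α1 u)) (subcurve p 0 (S (φ n)) (β1 u))
              (subcurve p 0 s0 (β1 u))
        _ ≤ (ε + 1/((φ n : ℝ)+1)) + δ/2 := by
            apply add_le_add (hm1 u hu)
            rw [subcurve_zero, subcurve_zero]
            exact hpp.le
        _ ≤ ε + δ := by linarith
    have claim2 : frechetDist (segCurve (p (j k)) (p i)) (subcurve p s0 t) ≤ ε := by
      apply le_of_forall_pos_le_add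
      intro δ hδ
      obtain ⟨η, hη, hUC'⟩ := hUC (δ/2) (by linarith)
      obtain ⟨n, hd, hsmall⟩ := pick δ hδ η hη
      obtain ⟨α2, β2, hα2, hβ2, hm2⟩ := hSsuf (φ n)
      rw [hjk1] at hm2
      apply frechetDist_le_of_matching (by linarith)
      refine ⟨α2, β2, hα2, hβ2, ?_⟩
      intro u hu
      have hb2 : β2 u ∈ Icc (0:ℝ) 1 := hβ2.mem hu
      have harg1 : S (φ n) + β2 u * (t - S (φ n)) ∈ Icc (0:ℝ) t := by
        constructor
        · have := mul_nonneg hb2.1 (sub_nonneg.2 (hSt (φ n)))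
          linarith [hS0 (φ n)]
        · nlinarith [hb2.2, hSt (φ n), hb2.1]
      have harg2 : s0 + β2 u * (t - s0) ∈ Icc (0:ℝ) t := by
        constructor
        · have := mul_nonneg hb2.1 (sub_nonneg.2 hs0mem.2)
          linarith [hs0mem.1]
        · nlinarith [hb2.2, hs0mem.2, hb2.1]
      have hdist : dist (S (φ n) + β2 u * (t - S (φ n))) (s0 + β2 u * (t - s0)) < η := by
        rw [Real.dist_eq]
        have e : S (φ n) + β2 u * (t - S (φ n)) - (s0 + β2 u * (t - s0))
            = (1 - β2 u) * (S (φ n) - s0) := by ring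
        rw [e, abs_mul, abs_of_nonneg (by linarith [hb2.2] : (0:ℝ) ≤ 1 - β2 u)]
        calc (1 - β2 u) * |S (φ n) - s0| ≤ 1 * |S (φ n) - s0| :=
              mul_le_mul_of_nonneg_right (by linarith [hb2.1]) (abs_nonneg _)
          _ = |S (φ n) - s0| := one_mul _
          _ < η := by rw [← Real.dist_eq]; exact hd
      have hpp := hUC' _ harg1 _ harg2 hdist
      rw [dist_eq_norm] at hpp
      calc ‖segCurve (p (j k)) (p i) (α2 u) - subcurve p s0 t (β2 u)‖
          ≤ ‖segCurve (p (j k)) (p i) (α2 u) - subcurve p (S (φ n)) t (β2 u)‖ +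
            ‖subcurve p (S (φ n)) t (β2 u) - subcurve p s0 t (β2 u)‖ := by
            simpa [dist_eq_norm] using dist_triangle
              (segCurve (p (j k)) (p i) (α2 u)) (subcurve p (S (φ n)) t (β2 u))
              (subcurve p s0 t (β2 u))
        _ ≤ (ε + 1/((φ n : ℝ)+1)) + δ/2 := by
            apply add_le_add (hm2 u hu)
            rw [subcurve_arg, subcurve_arg]
            exact hpp.le
        _ ≤ ε + δ := by linarith
    exact ⟨j k, hhi, s0, hs0mem.1, hs0mem.2,
      ⟨j, hjmono.mono (Iic_subset_Iic.2 (Nat.le_succ k)), hj0, rfl, claim1⟩, claim2⟩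
  · rintro ⟨h, hhi, s, hs0, hst, ⟨j1, hj1mono, hj10, hj1k, hj1d⟩, hsegd⟩
    refine ⟨fun m => if m ≤ k then j1 m else i, ?_, ?_, ?_, ?_⟩
    · intro a ha b hb hab
      simp only [mem_Iic] at ha hb
      show (if a ≤ k then j1 a else i) < (if b ≤ k then j1 b else i)
      by_cases hbk : b ≤ k
      · simp only [if_pos (le_trans hab.le hbk), if_pos hbk]
        exact hj1mono (mem_Iic.2 (le_trans hab.le hbk)) (mem_Iic.2 hbk) hab
      · rw [if_neg hbk]
        by_cases hak : a ≤ k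
        · rw [if_pos hak]
          calc j1 a ≤ j1 k :=
                hj1mono.monotoneOn (mem_Iic.2 hak) (mem_Iic.2 le_rfl) hak
            _ = h := hj1k
            _ < i := hhi
        · exact absurd hab (by omega)
    · show (if 0 ≤ k then j1 0 else i) = 0
      rw [if_pos (Nat.zero_le k), hj10]
    · show (if k+1 ≤ k then j1 (k+1) else i) = i
      rw [if_neg (Nat.not_succ_le_self k)]
    · apply le_of_forall_pos_le_add
      intro δ hδ
      have hB1 : ∀ u ∈ Icc (0:ℝ) 1,
          ‖simplCurve p j1 k u - subcurve p 0 s u‖ ≤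
            polyBound (fun m => p (j1 (min m k))) k + polyBound p ⌈s⌉₊ := by
        intro u hu
        calc ‖simplCurve p j1 k u - subcurve p 0 s u‖
            ≤ ‖simplCurve p j1 k u‖ + ‖subcurve p 0 s u‖ := norm_sub_le _ _
          _ ≤ _ := add_le_add (norm_simplCurve_le p j1 k u hu)
              (norm_subcurve_le p le_rfl hs0 u hu)
      obtain ⟨α1, β1, hα1, hβ1, hm1⟩ := exists_matching _ hB1 hj1d hε hδ
      have hB2 : ∀ u ∈ Icc (0:ℝ) 1,
          ‖segCurve (p h) (p i) u - subcurve p s t u‖ ≤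
            (‖p h‖ + ‖p i - p h‖) + polyBound p ⌈t⌉₊ := by
        intro u hu
        calc ‖segCurve (p h) (p i) u - subcurve p s t u‖
            ≤ ‖segCurve (p h) (p i) u‖ + ‖subcurve p s t u‖ := norm_sub_le _ _
          _ ≤ _ := add_le_add (norm_segCurve_le (p h) (p i) u hu)
              (norm_subcurve_le p hs0 hst u hu)
      obtain ⟨α2, β2, hα2, hβ2, hm2⟩ := exists_matching _ hB2 hsegd hε hδ
      have hm2' : ∀ u ∈ Icc (0:ℝ) 1,
          ‖segCurve (p (j1 k)) (p i) (α2 u) - subcurve p s t (β2 u)‖ ≤ ε + δ := by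
        rw [hj1k]; exact hm2
      exact glue_matching p j1 i k hs0 hst (by linarith) α1 β1 α2 β2
        hα1 hβ1 hα2 hβ2 hm1 hm2'
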